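/- Every factor of a digitally convex word is digitally convex. Equivalently: if wx (or xw) is digitally convex for a letter x, then w is digitally convex. -/

import Mathlib

/-- A word is primitive if it is not a proper power: `w = v^n` implies `n = 1`. -/
def Primitive {α : Type*} (w : List α) : Prop :=
  ∀ (v : List α) (n : ℕ), w = (List.replicate n v).flatten → n = 1

/-- A Lyndon word: nonempty and lexicographically strictly smaller than all
its proper nonempty suffixes. -/
def Lyndon {α : Type*} [LinearOrder α] (w : List α) : Prop :=
  w ≠ [] ∧ ∀ u v : List α, w = u ++ v → u ≠ [] → v ≠ [] → List.Lex (· < ·) w v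

/-- A Lyndon word for the reversed order `1 < 0` on `Bool`. -/
def LyndonRev (w : List Bool) : Prop :=
  w ≠ [] ∧ ∀ u v : List Bool, w = u ++ v → u ≠ [] → v ≠ [] → List.Lex (· > ·) w v

/-- A binary word is balanced if the numbers of `1`s in any two factors of the
same length differ by at most 1. (`false` plays the role of `0`, `true` of `1`.) -/
def Balanced01 (w : List Bool) : Prop :=
  ∀ u v : List Bool, u <:+: w → v <:+: w → u.length = v.length →
    (u.count true : ℤ) - (v.count true : ℤ) ≤ 1

/-- `w` has period `p`: `w[i] = w[i+p]` for all valid indices. -/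
def HasPeriod (w : List Bool) (p : ℕ) : Prop :=
  ∀ i : ℕ, i + p < w.length → w[i]? = w[i + p]?

/-- A central word: it has coprime periods `p`, `q` and length `p + q - 2`. -/
def Central (w : List Bool) : Prop :=
  ∃ p q : ℕ, Nat.Coprime p q ∧ HasPeriod w p ∧ HasPeriod w q ∧ w.length + 2 = p + q

/-- The lower Christoffel word of slope `b/a`: letter `i` is `1` (`true`) iff the
line `y = bx/(a+b)`... encoded via floor differences `⌊(i+1)b/(a+b)⌋ - ⌊ib/(a+b)⌋`. -/
def chr (a b : ℕ) : List Bool :=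
  List.ofFn (fun i : Fin (a + b) =>
    decide ((i : ℕ) * b / (a + b) < ((i : ℕ) + 1) * b / (a + b)))

/-- An (upward) digitally convex word: all factors of its Lyndon factorization
(for the order `0 < 1`) are balanced Lyndon words, i.e. primitive lower
Christoffel words. -/
def DC (w : List Bool) : Prop :=
  ∃ L : List (List Bool), L.flatten = w ∧ (∀ x ∈ L, Lyndon x ∧ Balanced01 x) ∧
    L.Chain' (fun a b => ¬ List.Lex (· < ·) a b)

/-- A downward digitally convex word: all factors of its Lyndon factorization
for the order `1 < 0` are balanced. -/
def DCdown (w : List Bool) : Prop :=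
  ∃ L : List (List Bool), L.flatten = w ∧ (∀ x ∈ L, LyndonRev x ∧ Balanced01 x) ∧
    L.Chain' (fun a b => ¬ List.Lex (· > ·) a b)

/-- `(u, v)` is the standard factorization of `u ++ v`: both parts nonempty and
`v` is the lexicographically least proper nonempty suffix of `u ++ v`. -/
def StdFact (u v : List Bool) : Prop :=
  u ≠ [] ∧ v ≠ [] ∧
    ∀ s : List Bool, s ≠ [] → s ≠ u ++ v → s <:+ u ++ v →
      s = v ∨ List.Lex (· < ·) v s

/-- A word is unbordered if it has no nonempty proper border. -/
def Unbordered (w : List Bool) : Prop :=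
  ∀ u : List Bool, u <+: w → u <:+ w → u ≠ w → u = []


section Aux

private lemma lex_prefix_append {u v : List Bool} (h : v ≠ []) :
    List.Lex (· < ·) u (u ++ v) := by
  induction u with
  | nil => cases v with
    | nil => simp at h
    | cons a t => exact List.Lex.nil
  | cons a t ih => exact List.Lex.cons ih

private lemma lex_append_left (u : List Bool) {v w : List Bool}
    (h : List.Lex (· < ·) v w) : List.Lex (· < ·) (u ++ v) (u ++ w) := by
  induction u with
  | nil => exact h
  | cons a t ih => exact List.Lex.cons ih

private lemma lex_append_of_not_prefix : ∀ (u s : List Bool),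
    List.Lex (· < ·) u s → ¬ u <+: s → ∀ v w : List Bool,
    List.Lex (· < ·) (u ++ v) (s ++ w) := by
  intro u
  induction u with
  | nil => intro s h hp v w; exact absurd (List.nil_prefix) hp
  | cons a u ih =>
    intro s h hp v w
    cases h with
    | rel hab => exact List.Lex.rel hab
    | cons h' =>
      have hp' : ¬ u <+: _ := fun hc => hp (List.cons_prefix_cons.mpr ⟨rfl, hc⟩)
      exact List.Lex.cons (ih _ h' hp' v w)

private lemma lex_trans {u v w : List Bool} (h1 : List.Lex (· < ·) u v)
    (h2 : List.Lex (· < ·) v w) : List.Lex (· < ·) u w :=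
  lt_trans (α := List Bool) h1 h2

private lemma lex_of_proper_prefix {p x : List Bool} (hp : p <+: x) (hne : p ≠ x) :
    List.Lex (· < ·) p x := by
  obtain ⟨t, rfl⟩ := hp
  have ht : t ≠ [] := by rintro rfl; simp at hne
  exact lex_prefix_append ht

private lemma lyndon_lex_suffix {x s : List Bool} (hx : Lyndon x) (hs : s <:+ x)
    (hn : s ≠ []) (hne : s ≠ x) : List.Lex (· < ·) x s := by
  obtain ⟨q, rfl⟩ := hs
  have hq : q ≠ [] := by rintro rfl; simp at hne
  exact hx.2 q s rfl hq hn

private lemma suffix_split {u a b : List Bool} (h : u <:+ a ++ b) :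
    u <:+ b ∨ ∃ t, t <:+ a ∧ u = t ++ b := by
  obtain ⟨s, hs⟩ := h
  by_cases hl : a.length ≤ s.length
  · left
    have hap : a <+: s := List.prefix_of_prefix_length_le (List.prefix_append a b) ⟨u, hs⟩ hl
    obtain ⟨s', rfl⟩ := hap
    rw [List.append_assoc] at hs
    exact ⟨s', List.append_cancel_left hs⟩
  · right
    push_neg at hl
    have hsp : s <+: a := List.prefix_of_prefix_length_le ⟨u, hs⟩ (List.prefix_append a b) hl.le
    obtain ⟨t, rfl⟩ := hsp
    rw [List.append_assoc] at hs
    exact ⟨t, ⟨s, rfl⟩, List.append_cancel_left hs⟩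

private lemma prefix_split {u a b : List Bool} (h : u <+: a ++ b) :
    u <+: a ∨ ∃ p, p <+: b ∧ u = a ++ p := by
  by_cases hl : u.length ≤ a.length
  · left; exact List.prefix_of_prefix_length_le h (List.prefix_append a b) hl
  · right
    push_neg at hl
    have hau : a <+: u := List.prefix_of_prefix_length_le (List.prefix_append a b) h hl.le
    obtain ⟨p, rfl⟩ := hau
    obtain ⟨s, hs⟩ := h
    rw [List.append_assoc] at hs
    exact ⟨p, ⟨s, List.append_cancel_left hs⟩, rfl⟩

private lemma lyndon_append {u v : List Bool} (hu : Lyndon u) (hv : Lyndon v)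
    (huv : List.Lex (· < ·) u v) : Lyndon (u ++ v) := by
  have hune := hu.1
  have key : List.Lex (· < ·) (u ++ v) v := by
    by_cases hp : u <+: v
    · obtain ⟨v', rfl⟩ := hp
      have hv' : v' ≠ [] := by
        rintro rfl
        rw [List.append_nil] at huv
        exact absurd huv (lt_irrefl (α := List Bool) u)
      exact lex_append_left u (hv.2 u v' rfl hune hv')
    · simpa using lex_append_of_not_prefix u v huv hp v []
  refine ⟨by simp [hune], ?_⟩
  intro a b hab hane hbne
  have hbsuf : b <:+ u ++ v := ⟨a, hab.symm⟩
  rcases suffix_split hbsuf with hbv | ⟨t, ht, rfl⟩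
  · by_cases hbe : b = v
    · rw [hbe]; exact key
    · exact lex_trans key (lyndon_lex_suffix hv hbv hbne hbe)
  · by_cases hte : t = []
    · subst hte; simpa using key
    · by_cases htu : t = u
      · have hlen : a.length + (t.length + v.length) = u.length + v.length := by
          simpa using (congrArg List.length hab).symm
        rw [htu] at hlen
        exact absurd (List.length_eq_zero_iff.mp (by omega)) hane
      · have h1 : List.Lex (· < ·) u t := lyndon_lex_suffix hu ht hte htu
        have h2 : ¬ u <+: t := by
          intro hp
          exact htu (hp.eq_of_length (le_antisymm hp.length_le ht.length_le)).symm
        exact lex_append_of_not_prefix u t h1 h2 v v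

end Aux


private lemma lyndon_single (a : Bool) : Lyndon [a] := by
  refine ⟨by simp, ?_⟩
  intro u v h hu hv
  have hlen : u.length + v.length = 1 := by simpa using (congrArg List.length h).symm
  have h1 : 1 ≤ u.length := List.length_pos_iff.mpr hu
  have h2 : 1 ≤ v.length := List.length_pos_iff.mpr hv
  omega

private lemma cfl_appendOne : ∀ (L : List (List Bool)) (x : List Bool),
    (∀ y ∈ L, Lyndon y) → L.Chain' (fun a b => ¬ List.Lex (· < ·) a b) → Lyndon x →
    ∃ M : List (List Bool), M.flatten = L.flatten ++ x ∧ (∀ y ∈ M, Lyndon y) ∧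
      M.Chain' (fun a b => ¬ List.Lex (· < ·) a b) := by
  intro L
  induction L using List.reverseRecOn with
  | nil => intro x _ _ hx; exact ⟨[x], by simp, by simp [hx], List.isChain_singleton x⟩
  | append_singleton L' ℓ ih =>
    intro x hall hch hx
    have hℓ : Lyndon ℓ := hall ℓ (by simp)
    obtain ⟨hch', -, hlink⟩ := List.isChain_append.mp hch
    by_cases hc : List.Lex (· < ·) ℓ x
    · obtain ⟨M, h1, h2, h3⟩ := ih (ℓ ++ x) (fun y hy => hall y (by simp [hy])) hch'
        (lyndon_append hℓ hx hc)
      exact ⟨M, by simp [h1], h2, h3⟩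
    · refine ⟨L' ++ [ℓ, x], by simp, ?_, ?_⟩
      · intro y hy
        rcases List.mem_append.mp hy with hy | hy
        · exact hall y (by simp [hy])
        · simp at hy
          rcases hy with rfl | rfl
          · exact hℓ
          · exact hx
      · have : L' ++ [ℓ, x] = (L' ++ [ℓ]) ++ [x] := by simp
        rw [this]
        refine List.isChain_append.mpr ⟨hch, by simp, ?_⟩
        intro a ha y hy
        simp at hy
        rw [List.getLast?_concat] at ha
        simp at ha
        rw [← ha, ← hy]
        exact hc

private lemma cfl_exists (w : List Bool) :
    ∃ M : List (List Bool), M.flatten = w ∧ (∀ y ∈ M, Lyndon y) ∧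
      M.Chain' (fun a b => ¬ List.Lex (· < ·) a b) := by
  induction w using List.reverseRecOn with
  | nil => exact ⟨[], by simp, by simp, List.isChain_nil⟩
  | append_singleton w' a ih =>
    obtain ⟨L, h1, h2, h3⟩ := ih
    obtain ⟨M, g1, g2, g3⟩ := cfl_appendOne L [a] h2 h3 (lyndon_single a)
    exact ⟨M, by rw [g1, h1], g2, g3⟩

private lemma bal_infix {x y : List Bool} (hx : Balanced01 x) (h : y <:+: x) :
    Balanced01 y :=
  fun u v hu hv hl => hx u v (hu.trans h) (hv.trans h) hl

private lemma getLast?_suffix_flatten : ∀ (M : List (List Bool)) (l : List Bool),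
    M.getLast? = some l → l ∈ M ∧ l <:+ M.flatten := by
  intro M
  induction M using List.reverseRecOn with
  | nil => intro l h; simp at h
  | append_singleton M' x _ =>
    intro l h
    rw [List.getLast?_concat] at h
    simp at h
    subst h
    exact ⟨by simp, ⟨M'.flatten, by simp⟩⟩

private lemma head?_prefix_flatten : ∀ (M : List (List Bool)) (l : List Bool),
    M.head? = some l → l ∈ M ∧ l <+: M.flatten := by
  intro M
  cases M with
  | nil => intro l h; simp at h
  | cons x M' =>
    intro l h
    simp at h
    subst h
    exact ⟨by simp, ⟨M'.flatten, by simp⟩⟩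

private lemma DC_suffix_aux : ∀ (L : List (List Bool)),
    (∀ y ∈ L, Lyndon y ∧ Balanced01 y) →
    L.Chain' (fun a b => ¬ List.Lex (· < ·) a b) →
    ∀ u : List Bool, u <:+ L.flatten → DC u := by
  intro L
  induction L with
  | nil =>
    intro _ _ u hu
    rw [List.flatten_nil, List.suffix_nil] at hu
    exact ⟨[], by simp [hu], by simp, List.isChain_nil⟩
  | cons x L' ih =>
    intro hmem hch u hu
    rw [List.flatten_cons] at hu
    rcases suffix_split hu with h | ⟨t, ht, rfl⟩
    · exact ih (fun y hy => hmem y (List.mem_cons_of_mem _ hy)) hch.tail u h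
    · obtain ⟨M₀, hf, hly, hcM⟩ := cfl_exists t
      obtain ⟨hlink, hchL'⟩ := List.isChain_cons.mp hch
      refine ⟨M₀ ++ L', by simp [hf], ?_, ?_⟩
      · intro y hy
        rcases List.mem_append.mp hy with hy | hy
        · refine ⟨hly y hy, ?_⟩
          have h1 : y <:+: t := hf ▸ List.infix_of_mem_flatten hy
          exact bal_infix (hmem x (by simp)).2 (h1.trans ht.isInfix)
        · exact hmem y (by simp [hy])
      · refine List.isChain_append.mpr ⟨hcM, hchL', ?_⟩
        intro l hl y hy
        obtain ⟨hmeml, hlsuf0⟩ := getLast?_suffix_flatten M₀ l hl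
        have hlsuf : l <:+ x := (hf ▸ hlsuf0).trans ht
        have hxy : ¬ List.Lex (· < ·) x y := hlink y hy
        have hln : l ≠ [] := (hly l hmeml).1
        by_cases hlx : l = x
        · rw [hlx]; exact hxy
        · have hxl := lyndon_lex_suffix (hmem x (by simp)).1 hlsuf hln hlx
          exact fun hcon => hxy (lex_trans hxl hcon)

private lemma DC_prefix_aux : ∀ (L : List (List Bool)),
    (∀ y ∈ L, Lyndon y ∧ Balanced01 y) →
    L.Chain' (fun a b => ¬ List.Lex (· < ·) a b) →
    ∀ u : List Bool, u <+: L.flatten → DC u := by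
  intro L
  induction L using List.reverseRecOn with
  | nil =>
    intro _ _ u hu
    rw [List.flatten_nil, List.prefix_nil] at hu
    exact ⟨[], by simp [hu], by simp, List.isChain_nil⟩
  | append_singleton L' x ih =>
    intro hmem hch u hu
    obtain ⟨hchL', -, hlink0⟩ := List.isChain_append.mp hch
    have hflat : (L' ++ [x]).flatten = L'.flatten ++ x := by simp
    rw [hflat] at hu
    rcases prefix_split hu with h | ⟨p, hp, rfl⟩
    · exact ih (fun y hy => hmem y (by simp [hy])) hchL' u h
    · obtain ⟨M₀, hf, hly, hcM⟩ := cfl_exists p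
      refine ⟨L' ++ M₀, by simp [hf], ?_, ?_⟩
      · intro y hy
        rcases List.mem_append.mp hy with hy | hy
        · exact hmem y (by simp [hy])
        · refine ⟨hly y hy, ?_⟩
          have h1 : y <:+: p := hf ▸ List.infix_of_mem_flatten hy
          exact bal_infix (hmem x (by simp)).2 (h1.trans hp.isInfix)
      · refine List.isChain_append.mpr ⟨hchL', hcM, ?_⟩
        intro a ha y hy
        have hax : ¬ List.Lex (· < ·) a x := hlink0 a ha x (by simp)
        obtain ⟨hmemy, hypre0⟩ := head?_prefix_flatten M₀ y hy
        have hypre : y <+: x := (hf ▸ hypre0).trans hp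
        by_cases hyx : y = x
        · rw [hyx]; exact hax
        · have hlt := lex_of_proper_prefix hypre hyx
          exact fun hcon => hax (lex_trans hcon hlt)

/-- Every factor of a digitally convex word is digitally convex. -/
theorem stmt11 (w u : List Bool) (hw : DC w) (hu : u <:+: w) : DC u := by
  obtain ⟨s, t, rfl⟩ := hu
  obtain ⟨L, hfl, hmem, hch⟩ := hw
  have h1 : u ++ t <:+ L.flatten := by
    rw [hfl]; exact ⟨s, by simp [List.append_assoc]⟩
  obtain ⟨L2, hfl2, hmem2, hch2⟩ := DC_suffix_aux L hmem hch (u ++ t) h1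
  exact DC_prefix_aux L2 hmem2 hch2 u (hfl2 ▸ List.prefix_append u t)
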